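/- Behavioral cloning bound: Let π* be a deterministic expert policy and π a policy such that E_{s∼d^{π*}}[ℓ(s, π, π*)] = ε_b, where ℓ(s,π,π*) = Pr(π(s) ≠ π*(s)) is the 0-1 loss under the expert state distribution d^{π*} = (1/H)Σ_h d_h^{π*}. Then J(π*) − J(π) ≤ H² ε_b. -/

import Mathlib

open Finset

noncomputable section

attribute [local instance] Classical.propDecidable

variable {S A : Type*}

/-- `p` is a probability distribution on a finite type. -/
def IsDist {X : Type*} [Fintype X] (p : X → ℝ) : Prop :=
  (∀ x, 0 ≤ p x) ∧ ∑ x, p x = 1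

/-- A (stochastic) policy: a distribution over actions at each state. -/
def IsPolicy [Fintype A] (π : S → A → ℝ) : Prop := ∀ s, IsDist (π s)

/-- A transition kernel. -/
def IsKernel [Fintype S] (P : S → A → S → ℝ) : Prop := ∀ s a, IsDist (P s a)

/-- Total variation distance on a finite type. -/
def tvDist {X : Type*} [Fintype X] (p q : X → ℝ) : ℝ := (1/2) * ∑ x, |p x - q x|

variable [Fintype S] [Fintype A]

/-- Q-value for a (possibly nonstationary) policy `πt` (indexed by time step):
`Qn P r πt k t s a` is the expected reward-to-go with `k` steps remaining, at current time
step `t`, taking action `a` in state `s` and thereafter following `πt`. -/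
def Qn (P : S → A → S → ℝ) (r : S → A → ℝ) (πt : ℕ → S → A → ℝ) :
    ℕ → ℕ → S → A → ℝ
  | 0, _ => fun _ _ => 0
  | k+1, t => fun s a =>
      r s a + ∑ s', P s a s' * ∑ a', πt (t+1) s' a' * Qn P r πt k (t+1) s' a'

/-- Expected Q-value when the first action is drawn from `π''`. -/
def QEn (P : S → A → S → ℝ) (r : S → A → ℝ) (πt : ℕ → S → A → ℝ)
    (k t : ℕ) (s : S) (π'' : S → A → ℝ) : ℝ :=
  ∑ a, π'' s a * Qn P r πt k t s a

/-- State distribution at (0-indexed) step `h` when following `πt` from initial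
distribution `ρ`. -/
def stateDistN (P : S → A → S → ℝ) (ρ : S → ℝ) (πt : ℕ → S → A → ℝ) : ℕ → S → ℝ
  | 0 => ρ
  | h+1 => fun s' => ∑ s, ∑ a, stateDistN P ρ πt h s * πt h s a * P s a s'

/-- Policy value: expected cumulative reward over horizon `H`. -/
def Jn (P : S → A → S → ℝ) (r : S → A → ℝ) (ρ : S → ℝ) (H : ℕ)
    (πt : ℕ → S → A → ℝ) : ℝ :=
  ∑ s, ρ s * QEn P r πt H 0 s (πt 0)

/-- Stationary-policy Q-value with `k` steps remaining. -/
def Qst (P : S → A → S → ℝ) (r : S → A → ℝ) (π : S → A → ℝ) (k : ℕ) :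
    S → A → ℝ := Qn P r (fun _ => π) k 0

/-- Stationary expected Q-value, first action drawn from `π''`. -/
def QE (P : S → A → S → ℝ) (r : S → A → ℝ) (π : S → A → ℝ) (k : ℕ) (s : S)
    (π'' : S → A → ℝ) : ℝ := ∑ a, π'' s a * Qst P r π k s a

/-- State distribution at (0-indexed) step `h` under a stationary policy. -/
def stateDist (P : S → A → S → ℝ) (ρ : S → ℝ) (π : S → A → ℝ) : ℕ → S → ℝ :=
  stateDistN P ρ (fun _ => π)

/-- Policy value of a stationary policy. -/
def J (P : S → A → S → ℝ) (r : S → A → ℝ) (ρ : S → ℝ) (H : ℕ)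
    (π : S → A → ℝ) : ℝ := Jn P r ρ H (fun _ => π)

lemma Qn_const (P : S → A → S → ℝ) (r : S → A → ℝ) (π : S → A → ℝ) :
    ∀ k t, Qn P r (fun _ => π) k t = Qn P r (fun _ => π) k 0 := by
  intro k
  induction k with
  | zero => intro t; rfl
  | succ k ih =>
      intro t; funext s a
      show Qn P r (fun _ => π) (k+1) t s a = Qn P r (fun _ => π) (k+1) 0 s a
      simp only [Qn]
      rw [ih (t+1), ih 1]

lemma Qst_succ (P : S → A → S → ℝ) (r : S → A → ℝ) (π : S → A → ℝ) (k : ℕ) (s : S) (a : A) :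
    Qst P r π (k+1) s a
      = r s a + ∑ s', P s a s' * ∑ a', π s' a' * Qst P r π k s' a' := by
  show Qn P r (fun _ => π) (k+1) 0 s a = _
  simp only [Qn]
  rw [Qn_const P r π k 1]
  rfl

lemma Qst_bounds (P : S → A → S → ℝ) (r : S → A → ℝ) (π : S → A → ℝ)
    (hP : IsKernel P) (hr : ∀ s a, 0 ≤ r s a ∧ r s a ≤ 1) (hπ : IsPolicy π) :
    ∀ k s a, 0 ≤ Qst P r π k s a ∧ Qst P r π k s a ≤ k := by
  intro k
  induction k with
  | zero => intro s a; constructor <;> simp [Qst, Qn]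
  | succ k ih =>
      intro s a
      rw [Qst_succ]
      have hV : ∀ s', 0 ≤ ∑ a', π s' a' * Qst P r π k s' a' ∧
          (∑ a', π s' a' * Qst P r π k s' a') ≤ k := by
        intro s'
        constructor
        · exact Finset.sum_nonneg fun a' _ =>
            mul_nonneg ((hπ s').1 a') (ih s' a').1
        · calc ∑ a', π s' a' * Qst P r π k s' a'
              ≤ ∑ a', π s' a' * k := by
                refine Finset.sum_le_sum fun a' _ => ?_
                exact mul_le_mul_of_nonneg_left (ih s' a').2 ((hπ s').1 a')
            _ = k := by rw [← Finset.sum_mul, (hπ s').2, one_mul]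
      constructor
      · have : 0 ≤ ∑ s', P s a s' * ∑ a', π s' a' * Qst P r π k s' a' :=
          Finset.sum_nonneg fun s' _ => mul_nonneg ((hP s a).1 s') (hV s').1
        linarith [(hr s a).1]
      · have : ∑ s', P s a s' * ∑ a', π s' a' * Qst P r π k s' a' ≤ k := by
          calc ∑ s', P s a s' * ∑ a', π s' a' * Qst P r π k s' a'
              ≤ ∑ s', P s a s' * k := by
                refine Finset.sum_le_sum fun s' _ => ?_
                exact mul_le_mul_of_nonneg_left (hV s').2 ((hP s a).1 s')
            _ = k := by rw [← Finset.sum_mul, (hP s a).2, one_mul]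
        push_cast
        linarith [(hr s a).2]

lemma stateDist_nonneg (P : S → A → S → ℝ) (ρ : S → ℝ) (π : S → A → ℝ)
    (hP : IsKernel P) (hρ : IsDist ρ) (hπ : IsPolicy π) :
    ∀ h s, 0 ≤ stateDist P ρ π h s := by
  intro h
  induction h with
  | zero => exact hρ.1
  | succ h ih =>
      intro s'
      refine Finset.sum_nonneg fun s _ => Finset.sum_nonneg fun a _ => ?_
      exact mul_nonneg (mul_nonneg (ih s) ((hπ s).1 a)) ((hP s a).1 s')

lemma sum_comm4 {α β γ δ : Type*} [Fintype α] [Fintype β] [Fintype γ] [Fintype δ]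
    (f : α → β → γ → δ → ℝ) :
    ∑ a, ∑ b, ∑ c, ∑ d, f a b c d = ∑ c, ∑ d, ∑ a, ∑ b, f a b c d := by
  calc ∑ a, ∑ b, ∑ c, ∑ d, f a b c d
      = ∑ a, ∑ c, ∑ b, ∑ d, f a b c d :=
        Finset.sum_congr rfl fun a _ => Finset.sum_comm
    _ = ∑ c, ∑ a, ∑ b, ∑ d, f a b c d := Finset.sum_comm
    _ = ∑ c, ∑ a, ∑ d, ∑ b, f a b c d :=
        Finset.sum_congr rfl fun c _ => Finset.sum_congr rfl fun a _ =>
          Finset.sum_comm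
    _ = ∑ c, ∑ d, ∑ a, ∑ b, f a b c d :=
        Finset.sum_congr rfl fun c _ => Finset.sum_comm

/-- One-step expansion of the expected Q-value with first action from `π''`. -/
lemma sum_mul_QE_succ (P : S → A → S → ℝ) (r : S → A → ℝ) (π π'' : S → A → ℝ)
    (μ : S → ℝ) (k : ℕ) :
    ∑ s, μ s * QE P r π (k+1) s π''
      = (∑ s, μ s * ∑ a, π'' s a * r s a)
        + ∑ s', (∑ s, ∑ a, μ s * π'' s a * P s a s') * QE P r π k s' π := by
  unfold QE
  simp only [Qst_succ, mul_add, Finset.mul_sum, Finset.sum_mul,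
    Finset.sum_add_distrib]
  congr 1
  rw [sum_comm4]
  exact Finset.sum_congr rfl fun _ _ => Finset.sum_congr rfl fun _ _ =>
    Finset.sum_congr rfl fun _ _ => Finset.sum_congr rfl fun _ _ => by ring

lemma stateDist_succ (P : S → A → S → ℝ) (ρ : S → ℝ) (π : S → A → ℝ) (h : ℕ) (s' : S) :
    stateDist P ρ π (h+1) s' = ∑ s, ∑ a, stateDist P ρ π h s * π s a * P s a s' := rfl

/-- Unrolling the value of a stationary policy from an arbitrary state distribution. -/
lemma sum_dist_QE (P : S → A → S → ℝ) (r : S → A → ℝ) (ρ : S → ℝ) (π : S → A → ℝ) :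
    ∀ m h, ∑ s, stateDist P ρ π h s * QE P r π m s π
      = ∑ t ∈ Finset.range m, ∑ s, stateDist P ρ π (h+t) s * ∑ a, π s a * r s a := by
  intro m
  induction m with
  | zero =>
      intro h
      simp [QE, Qst, Qn]
  | succ m ih =>
      intro h
      rw [sum_mul_QE_succ]
      have : ∑ s', (∑ s, ∑ a, stateDist P ρ π h s * π s a * P s a s') * QE P r π m s' π
          = ∑ s', stateDist P ρ π (h+1) s' * QE P r π m s' π := by
        refine Finset.sum_congr rfl fun s' _ => ?_
        rw [stateDist_succ]
      rw [this, ih (h+1), Finset.sum_range_succ']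
      simp only [Nat.add_zero]
      rw [add_comm]
      congr 1
      refine Finset.sum_congr rfl fun t _ => ?_
      have ht : h + 1 + t = h + (t + 1) := by omega
      rw [ht]

/-- Behavioral cloning bound: if the expected 0-1 loss of `π` against the deterministic
expert `π*` under the expert's average state distribution is `ε_b`, then
`J(π*) − J(π) ≤ H² ε_b`. -/
theorem bc_bound
    (P : S → A → S → ℝ) (r : S → A → ℝ) (ρ : S → ℝ) (H : ℕ)
    (hP : IsKernel P) (hρ : IsDist ρ) (hr : ∀ s a, 0 ≤ r s a ∧ r s a ≤ 1)
    (πstar π : S → A → ℝ) (hstar : IsPolicy πstar) (hπ : IsPolicy π)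
    (f : S → A) (hdet : ∀ s a, πstar s a = if a = f s then 1 else 0)
    (εb : ℝ)
    (hloss : (1 / (H : ℝ)) * ∑ h ∈ Finset.range H, ∑ s,
      stateDist P ρ πstar h s * (1 - π s (f s)) = εb) :
    J P r ρ H πstar - J P r ρ H π ≤ (H : ℝ)^2 * εb := by
  rcases Nat.eq_zero_or_pos H with hH | hH
  · subst hH
    simp [J, Jn, QEn, Qn]
  have hHne : (H : ℝ) ≠ 0 := Nat.cast_ne_zero.mpr hH.ne'
  -- the interpolating value function
  set F : ℕ → ℝ := fun h =>
    (∑ t ∈ Finset.range h, ∑ s, stateDist P ρ πstar t s * ∑ a, πstar s a * r s a)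
      + ∑ s, stateDist P ρ πstar h s * QE P r π (H - h) s π with hF
  have hJπ : J P r ρ H π = F 0 := by
    simp only [hF, Finset.range_zero, Finset.sum_empty, zero_add, Nat.sub_zero]
    rfl
  have hJstar : J P r ρ H πstar = F H := by
    have h1 : J P r ρ H πstar = ∑ s, stateDist P ρ πstar 0 s * QE P r πstar H s πstar := rfl
    rw [h1, sum_dist_QE P r ρ πstar H 0]
    simp only [hF, Nat.sub_self, zero_add]
    have hQE0 : ∀ s, QE P r π 0 s π = 0 := by
      intro s; simp [QE, Qst, Qn]
    simp [hQE0]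
  have key : ∀ h, h < H → F (h+1) - F h
      = ∑ s, stateDist P ρ πstar h s *
          (QE P r π (H-h) s πstar - QE P r π (H-h) s π) := by
    intro h hh
    have hHh : H - h = (H - (h+1)) + 1 := by omega
    have e1 : ∑ s, stateDist P ρ πstar h s * QE P r π (H-h) s πstar
        = (∑ s, stateDist P ρ πstar h s * ∑ a, πstar s a * r s a)
          + ∑ s', stateDist P ρ πstar (h+1) s' * QE P r π (H-(h+1)) s' π := by
      rw [hHh, sum_mul_QE_succ]
      rfl
    have e2 : ∑ s, stateDist P ρ πstar h s *
          (QE P r π (H-h) s πstar - QE P r π (H-h) s π)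
        = (∑ s, stateDist P ρ πstar h s * QE P r π (H-h) s πstar)
          - ∑ s, stateDist P ρ πstar h s * QE P r π (H-h) s π := by
      rw [← Finset.sum_sub_distrib]
      exact Finset.sum_congr rfl fun s _ => by ring
    rw [e2, e1]
    simp only [hF, Finset.sum_range_succ]
    ring
  have hbound : ∀ h, h < H → ∀ s,
      QE P r π (H-h) s πstar - QE P r π (H-h) s π ≤ (H : ℝ) * (1 - π s (f s)) := by
    intro h hh s
    have hQb := Qst_bounds P r π hP hr hπ
    have hfs : QE P r π (H-h) s πstar = Qst P r π (H-h) s (f s) := by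
      unfold QE
      simp [hdet, ite_mul, Finset.sum_ite_eq']
    have hsum : ∑ a, π s a = 1 := (hπ s).2
    have e3 : QE P r π (H-h) s πstar - QE P r π (H-h) s π
        = ∑ a, π s a * (Qst P r π (H-h) s (f s) - Qst P r π (H-h) s a) := by
      rw [hfs]
      unfold QE
      symm
      calc ∑ a, π s a * (Qst P r π (H-h) s (f s) - Qst P r π (H-h) s a)
          = ∑ a, (π s a * Qst P r π (H-h) s (f s) - π s a * Qst P r π (H-h) s a) :=
            Finset.sum_congr rfl fun a _ => by ring
        _ = (∑ a, π s a * Qst P r π (H-h) s (f s))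
              - ∑ a, π s a * Qst P r π (H-h) s a := Finset.sum_sub_distrib _ _
        _ = Qst P r π (H-h) s (f s) - ∑ a, π s a * Qst P r π (H-h) s a := by
            rw [← Finset.sum_mul, hsum, one_mul]
    rw [e3]
    have step1 : ∑ a, π s a * (Qst P r π (H-h) s (f s) - Qst P r π (H-h) s a)
        ≤ ∑ a, π s a * (if a = f s then 0 else (H : ℝ)) := by
      refine Finset.sum_le_sum fun a _ => ?_
      refine mul_le_mul_of_nonneg_left ?_ ((hπ s).1 a)
      by_cases hafs : a = f s
      · simp [hafs]
      · simp only [hafs, if_false]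
        have h1 := (hQb (H-h) s (f s)).2
        have h2 := (hQb (H-h) s a).1
        have h3 : ((H - h : ℕ) : ℝ) ≤ (H : ℝ) := Nat.cast_le.mpr (Nat.sub_le H h)
        linarith
    have step2 : ∑ a, π s a * (if a = f s then 0 else (H : ℝ))
        = (H : ℝ) * (1 - π s (f s)) := by
      have e4 : ∀ a, π s a * (if a = f s then 0 else (H : ℝ))
          = π s a * H - (if a = f s then π s a * H else 0) := by
        intro a; split_ifs <;> ring
      simp only [e4]
      rw [Finset.sum_sub_distrib, ← Finset.sum_mul, hsum]
      rw [Finset.sum_ite_eq' Finset.univ (f s) (fun a => π s a * H)]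
      simp
      ring
    linarith
  have hdpos : ∀ h s, 0 ≤ stateDist P ρ πstar h s :=
    stateDist_nonneg P ρ πstar hP hρ hstar
  have hloss' : ∑ h ∈ Finset.range H, ∑ s,
      stateDist P ρ πstar h s * (1 - π s (f s)) = (H : ℝ) * εb := by
    field_simp at hloss
    linarith [hloss]
  have tele : J P r ρ H πstar - J P r ρ H π
      = ∑ h ∈ Finset.range H, (F (h+1) - F h) := by
    rw [Finset.sum_range_sub F H, hJπ, hJstar]
  rw [tele]
  calc ∑ h ∈ Finset.range H, (F (h+1) - F h)
      = ∑ h ∈ Finset.range H, ∑ s, stateDist P ρ πstar h s *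
          (QE P r π (H-h) s πstar - QE P r π (H-h) s π) := by
        refine Finset.sum_congr rfl fun h hh => key h (Finset.mem_range.mp hh)
    _ ≤ ∑ h ∈ Finset.range H, ∑ s, stateDist P ρ πstar h s *
          ((H : ℝ) * (1 - π s (f s))) := by
        refine Finset.sum_le_sum fun h hh => Finset.sum_le_sum fun s _ => ?_
        exact mul_le_mul_of_nonneg_left
          (hbound h (Finset.mem_range.mp hh) s) (hdpos h s)
    _ = (H : ℝ) * ∑ h ∈ Finset.range H, ∑ s,
          stateDist P ρ πstar h s * (1 - π s (f s)) := by
        rw [Finset.mul_sum]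
        refine Finset.sum_congr rfl fun h _ => ?_
        rw [Finset.mul_sum]
        exact Finset.sum_congr rfl fun s _ => by ring
    _ = (H : ℝ)^2 * εb := by rw [hloss']; ring
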